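/- Let (g, [·,·], α) be a Hom-Lie algebra, (V, •, β) a representation, and f : g∧g → V a 2-cocycle in the Chevalley-Eilenberg complex (satisfying β∘f = f∘(α∧α)). Then g ⊕ V with bracket [(x,u),(y,v)]_f := ([x,y], x•v − y•u + f(x,y)) and twisting map α⊕β is a Hom-Lie algebra (the f-twisted semidirect product). Moreover, (g⊕V, [·,·]_0, [·,·]_f, α⊕β) is a compatible Hom-Lie algebra, where [·,·]_0 is the case f = 0. -/
import Mathlib


/-- A bilinear map, as a predicate on plain two-argument functions. -/
def IsBilin (K : Type*) {M N P : Type*} [Field K] [AddCommGroup M] [Module K M]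
    [AddCommGroup N] [Module K N] [AddCommGroup P] [Module K P]
    (b : M → N → P) : Prop :=
  (∀ x, IsLinearMap K (b x)) ∧ (∀ y, IsLinearMap K fun x => b x y)

/-- A Hom-Lie algebra structure: bilinear skew-symmetric bracket `b` and a linear
twisting map `α` satisfying multiplicativity and the Hom-Jacobi identity. -/
def IsHomLie (K : Type*) {g : Type*} [Field K] [AddCommGroup g] [Module K g]
    (b : g → g → g) (α : g → g) : Prop :=
  IsBilin K b ∧ IsLinearMap K α ∧
  (∀ x y, b x y = - b y x) ∧
  (∀ x y, α (b x y) = b (α x) (α y)) ∧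
  (∀ x y z, b (b x y) (α z) + b (b y z) (α x) + b (b z x) (α y) = 0)

/-- A compatible Hom-Lie algebra: both brackets and every linear combination of
them are Hom-Lie brackets with the same twisting map `α`. -/
def IsCompatHomLie (K : Type*) {g : Type*} [Field K] [AddCommGroup g] [Module K g]
    (b₁ b₂ : g → g → g) (α : g → g) : Prop :=
  IsHomLie K b₁ α ∧ IsHomLie K b₂ α ∧
  ∀ l m : K, IsHomLie K (fun x y => l • b₁ x y + m • b₂ x y) α

/-- A representation `(V, ρ, β)` of a Hom-Lie algebra `(g, b, α)`. -/
def IsRep (K : Type*) {g V : Type*} [Field K] [AddCommGroup g] [Module K g]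
    [AddCommGroup V] [Module K V]
    (b : g → g → g) (α : g → g) (ρ : g → V → V) (β : V → V) : Prop :=
  IsBilin K ρ ∧ IsLinearMap K β ∧
  (∀ x v, β (ρ x v) = ρ (α x) (β v)) ∧
  (∀ x y v, ρ (b x y) (β v) = ρ (α x) (ρ y v) - ρ (α y) (ρ x v))

/-- For a Hom-Lie algebra `(g,b,α)`, a representation `(V,ρ,β)` and a 2-cocycle
`f`, the `f`-twisted semidirect product on `g ⊕ V` is a Hom-Lie algebra, and
together with the untwisted (`f = 0`) semidirect product it forms a compatible
Hom-Lie algebra. -/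
theorem key {K g V : Type*} [Field K] [AddCommGroup g] [Module K g]
    [AddCommGroup V] [Module K V]
    (b : g → g → g) (α : g → g) (ρ : g → V → V) (β : V → V)
    (h : IsHomLie K b α) (hrep : IsRep K b α ρ β)
    (f : g → g → V) (hf : IsBilin K f) (hfskew : ∀ x y, f x y = - f y x)
    (hfeq : ∀ x y, β (f x y) = f (α x) (α y))
    (hcocycle : ∀ x y z,
      ρ (α x) (f y z) - ρ (α y) (f x z) + ρ (α z) (f x y)
        - f (b x y) (α z) + f (b x z) (α y) - f (b y z) (α x) = 0)
    (c m : K) :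
    IsHomLie K
      (fun p q : g × V => (c • b p.1 q.1, c • (ρ p.1 q.2 - ρ q.1 p.2) + m • f p.1 q.1))
      (fun p => (α p.1, β p.2)) := by
  obtain ⟨hb, hα, hskew, hmul, hjac⟩ := h
  obtain ⟨hρ, hβ, hβρ, hrepid⟩ := hrep
  have bad1 : ∀ x y z, b x (y + z) = b x y + b x z := fun x y z => (hb.1 x).map_add y z
  have bsm1 : ∀ (k : K) x y, b x (k • y) = k • b x y := fun k x y => (hb.1 x).map_smul k y
  have bad2 : ∀ x y z, b (x + y) z = b x z + b y z := fun x y z => (hb.2 z).map_add x y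
  have bsm2 : ∀ (k : K) x y, b (k • x) y = k • b x y := fun k x y => (hb.2 y).map_smul k x
  have rad1 : ∀ x u v, ρ x (u + v) = ρ x u + ρ x v := fun x u v => (hρ.1 x).map_add u v
  have rsm1 : ∀ (k : K) x v, ρ x (k • v) = k • ρ x v := fun k x v => (hρ.1 x).map_smul k v
  have rad2 : ∀ x y v, ρ (x + y) v = ρ x v + ρ y v := fun x y v => (hρ.2 v).map_add x y
  have rsm2 : ∀ (k : K) x v, ρ (k • x) v = k • ρ x v := fun k x v => (hρ.2 v).map_smul k x
  have rsub1 : ∀ x u v, ρ x (u - v) = ρ x u - ρ x v := fun x u v => (hρ.1 x).map_sub u v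
  have rneg1 : ∀ x v, ρ x (-v) = -ρ x v := fun x v => (hρ.1 x).map_neg v
  have fad1 : ∀ x y z, f x (y + z) = f x y + f x z := fun x y z => (hf.1 x).map_add y z
  have fsm1 : ∀ (k : K) x y, f x (k • y) = k • f x y := fun k x y => (hf.1 x).map_smul k y
  have fad2 : ∀ x y z, f (x + y) z = f x z + f y z := fun x y z => (hf.2 z).map_add x y
  have fsm2 : ∀ (k : K) x y, f (k • x) y = k • f x y := fun k x y => (hf.2 y).map_smul k x
  have fneg2 : ∀ x y, f (-x) y = -f x y := fun x y => (hf.2 y).map_neg x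
  have βad : ∀ u v, β (u + v) = β u + β v := hβ.map_add
  have βsm : ∀ (k : K) v, β (k • v) = k • β v := hβ.map_smul
  have βsub : ∀ u v, β (u - v) = β u - β v := hβ.map_sub
  refine ⟨⟨fun p => ⟨fun q r => ?_, fun k q => ?_⟩, fun q => ⟨fun p r => ?_, fun k p => ?_⟩⟩,
    ⟨fun p q => ?_, fun k p => ?_⟩, fun p q => ?_, fun p q => ?_, fun p q r => ?_⟩
  · simp only [Prod.fst_add, Prod.snd_add, Prod.mk_add_mk, Prod.mk.injEq,
      bad1, rad1, rad2, fad1]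
    constructor <;> module
  · simp only [Prod.smul_fst, Prod.smul_snd, Prod.smul_mk, Prod.mk.injEq,
      bsm1, rsm1, rsm2, fsm1]
    constructor <;> module
  · simp only [Prod.fst_add, Prod.snd_add, Prod.mk_add_mk, Prod.mk.injEq,
      bad2, rad1, rad2, fad2]
    constructor <;> module
  · simp only [Prod.smul_fst, Prod.smul_snd, Prod.smul_mk, Prod.mk.injEq,
      bsm2, rsm1, rsm2, fsm2]
    constructor <;> module
  · simp only [Prod.fst_add, Prod.snd_add, Prod.mk_add_mk, Prod.mk.injEq]
    exact ⟨hα.map_add _ _, βad _ _⟩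
  · simp only [Prod.smul_fst, Prod.smul_snd, Prod.smul_mk, Prod.mk.injEq]
    exact ⟨hα.map_smul _ _, βsm _ _⟩
  · simp only [Prod.neg_mk, Prod.mk.injEq, hskew p.1 q.1, hfskew p.1 q.1]
    constructor <;> module
  · simp only [Prod.mk.injEq]
    constructor
    · rw [hα.map_smul, hmul]
    · rw [βad, βsm, βsub, βsm, hβρ, hβρ, hfeq]
  · simp only [Prod.mk_add_mk, Prod.mk.injEq, Prod.mk_eq_zero]
    obtain ⟨x, u⟩ := p; obtain ⟨y, v⟩ := q; obtain ⟨z, w⟩ := r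
    simp only [bsm1, bsm2, rsm1, rsm2, fsm1, fsm2, rad1, rsub1, rsm1]
    constructor
    · linear_combination (norm := module) (c*c) • hjac x y z
    · have h1 := hrepid x y w
      have h2 := hrepid y z u
      have h3 := hrepid z x v
      have hc : ρ (α x) (f y z) + ρ (α y) (f z x) + ρ (α z) (f x y)
          - f (b x y) (α z) - f (b y z) (α x) - f (b z x) (α y) = 0 := by
        rw [hfskew z x, hskew z x, rneg1, fneg2]
        linear_combination (norm := module) hcocycle x y z
      linear_combination (norm := module) (c*c) • h1 + (c*c) • h2 + (c*c) • h3 - (c*m) • hc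

theorem stmt9 {K g V : Type*} [Field K] [AddCommGroup g] [Module K g]
    [AddCommGroup V] [Module K V]
    (b : g → g → g) (α : g → g) (ρ : g → V → V) (β : V → V)
    (h : IsHomLie K b α) (hrep : IsRep K b α ρ β)
    (f : g → g → V) (hf : IsBilin K f) (hfskew : ∀ x y, f x y = - f y x)
    (hfeq : ∀ x y, β (f x y) = f (α x) (α y))
    (hcocycle : ∀ x y z,
      ρ (α x) (f y z) - ρ (α y) (f x z) + ρ (α z) (f x y)
        - f (b x y) (α z) + f (b x z) (α y) - f (b y z) (α x) = 0) :
    IsHomLie K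
      (fun p q : g × V => (b p.1 q.1, ρ p.1 q.2 - ρ q.1 p.2 + f p.1 q.1))
      (fun p => (α p.1, β p.2)) ∧
    IsCompatHomLie K
      (fun p q : g × V => (b p.1 q.1, ρ p.1 q.2 - ρ q.1 p.2))
      (fun p q : g × V => (b p.1 q.1, ρ p.1 q.2 - ρ q.1 p.2 + f p.1 q.1))
      (fun p => (α p.1, β p.2)) := by
  have hkey := fun (c m : K) => key b α ρ β h hrep f hf hfskew hfeq hcocycle c m
  have e1 : (fun p q : g × V => (b p.1 q.1, ρ p.1 q.2 - ρ q.1 p.2 + f p.1 q.1))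
      = fun p q : g × V =>
        ((1:K) • b p.1 q.1, (1:K) • (ρ p.1 q.2 - ρ q.1 p.2) + (1:K) • f p.1 q.1) := by
    funext p q; simp
  have e0 : (fun p q : g × V => (b p.1 q.1, ρ p.1 q.2 - ρ q.1 p.2))
      = fun p q : g × V =>
        ((1:K) • b p.1 q.1, (1:K) • (ρ p.1 q.2 - ρ q.1 p.2) + (0:K) • f p.1 q.1) := by
    funext p q; simp
  refine ⟨e1 ▸ hkey 1 1, e0 ▸ hkey 1 0, e1 ▸ hkey 1 1, fun l m => ?_⟩
  have e2 : (fun p q : g × V => l • (b p.1 q.1, ρ p.1 q.2 - ρ q.1 p.2)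
        + m • (b p.1 q.1, ρ p.1 q.2 - ρ q.1 p.2 + f p.1 q.1))
      = fun p q : g × V =>
        ((l+m) • b p.1 q.1, (l+m) • (ρ p.1 q.2 - ρ q.1 p.2) + m • f p.1 q.1) := by
    funext p q
    simp only [Prod.smul_mk, Prod.mk_add_mk, Prod.mk.injEq]
    constructor <;> module
  show IsHomLie K (fun p q : g × V => l • (b p.1 q.1, ρ p.1 q.2 - ρ q.1 p.2)
    + m • (b p.1 q.1, ρ p.1 q.2 - ρ q.1 p.2 + f p.1 q.1)) (fun p => (α p.1, β p.2))
  rw [e2]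
  exact hkey (l+m) m
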